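/- Let F be continuous and nonnegative with max_{s∈[−1,1]} F(s) ≤ 2ε⁻². If u ∈ H¹(c,d) with u(c) and u(d) given, then ∫_c^d [(√(1+ε⁴u'(x)²) − 1)/ε³ + F(u(x))/ε] dx ≥ |∫_{u(c)}^{u(d)} √(F(s)(2 − ε²F(s))) ds|. -/
import Mathlib

lemma key_ineq (ε a y : ℝ) (hε : 0 < ε) (hy : 0 ≤ y) (h2 : 0 ≤ 2 - ε ^ 2 * y) :
    |a| * Real.sqrt (y * (2 - ε ^ 2 * y)) ≤
      (Real.sqrt (1 + ε ^ 4 * a ^ 2) - 1) / ε ^ 3 + y / ε := by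
  set s := Real.sqrt (1 + ε ^ 4 * a ^ 2) with hsdef
  have hs1 : 1 ≤ s := Real.one_le_sqrt.mpr (by nlinarith [sq_nonneg a, sq_nonneg (ε^2)])
  have hs2 : s ^ 2 = 1 + ε ^ 4 * a ^ 2 := Real.sq_sqrt (by positivity)
  have hε3 : (0:ℝ) < ε ^ 3 := by positivity
  have hX : (0:ℝ) ≤ a ^ 2 * (y * (2 - ε ^ 2 * y)) := by positivity
  rw [div_add_div _ _ (ne_of_gt hε3) (ne_of_gt hε), ← Real.sqrt_sq_eq_abs,
    ← Real.sqrt_mul (sq_nonneg a), le_div_iff₀ (by positivity)]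
  have hkey : a ^ 2 * (y * (2 - ε ^ 2 * y)) * ((ε ^ 4) ^ 2) ≤ ((s - 1) * ε + ε ^ 3 * y) ^ 2 := by
    have e1 : ε ^ 4 * a ^ 2 = s ^ 2 - 1 := by linarith
    have e2 : a ^ 2 * (y * (2 - ε ^ 2 * y)) * ((ε ^ 4) ^ 2)
        = (s ^ 2 - 1) * (y * (2 - ε ^ 2 * y)) * ε ^ 4 := by
      rw [show (s ^ 2 - 1) * (y * (2 - ε ^ 2 * y)) * ε ^ 4
          = (ε ^ 4 * a ^ 2) * (y * (2 - ε ^ 2 * y)) * ε ^ 4 from by rw [e1]]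
      ring
    rw [e2]
    nlinarith [sq_nonneg ((s - 1) * ε - ε ^ 3 * y * s)]
  calc Real.sqrt (a ^ 2 * (y * (2 - ε ^ 2 * y))) * (ε ^ 3 * ε)
      = Real.sqrt (a ^ 2 * (y * (2 - ε ^ 2 * y)) * ((ε ^ 4) ^ 2)) := by
        rw [Real.sqrt_mul hX, Real.sqrt_sq (by positivity : (0:ℝ) ≤ ε ^ 4)]; ring
    _ ≤ (s - 1) * ε + ε ^ 3 * y := by
        rw [show (s - 1) * ε + ε ^ 3 * y = Real.sqrt (((s - 1) * ε + ε ^ 3 * y) ^ 2) from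
          (Real.sqrt_sq (by nlinarith)).symm]
        exact Real.sqrt_le_sqrt hkey

theorem stmt_8 (ε c d : ℝ) (hε : 0 < ε) (hcd : c < d) (F : ℝ → ℝ)
    (hF : Continuous F) (hFnn : ∀ s, 0 ≤ F s)
    (hFmax : ∀ s ∈ Set.Icc (-1 : ℝ) 1, F s ≤ 2 / ε ^ 2)
    (u u' : ℝ → ℝ)
    (hu : ∀ x ∈ Set.Icc c d, HasDerivAt u (u' x) x)
    (hu' : ContinuousOn u' (Set.Icc c d))
    (hval : ∀ x ∈ Set.Icc c d, 0 ≤ 2 - ε ^ 2 * F (u x)) :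
    (∫ x in c..d, ((Real.sqrt (1 + ε ^ 4 * u' x ^ 2) - 1) / ε ^ 3 + F (u x) / ε)) ≥
      |∫ s in (u c)..(u d), Real.sqrt (F s * (2 - ε ^ 2 * F s))| := by
  have hIcc : Set.uIcc c d = Set.Icc c d := Set.uIcc_of_le hcd.le
  set g : ℝ → ℝ := fun s => Real.sqrt (F s * (2 - ε ^ 2 * F s)) with hg
  have hgcont : Continuous g :=
    (hF.mul (continuous_const.sub (continuous_const.mul hF))).sqrt
  have hucont : ContinuousOn u (Set.Icc c d) := fun x hx =>
    (hu x hx).continuousAt.continuousWithinAt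
  have hsub : (∫ s in (u c)..(u d), g s) = ∫ x in c..d, u' x • g (u x) := by
    rw [← intervalIntegral.integral_comp_smul_deriv (f := u) (f' := u') (g := g)
      (fun x hx => hu x (hIcc ▸ hx)) (hIcc ▸ hu') hgcont]
    rfl
  rw [hg] at hsub
  rw [hsub]
  have habs : ∀ x ∈ Set.Icc c d,
      |u' x • g (u x)| ≤ (Real.sqrt (1 + ε ^ 4 * u' x ^ 2) - 1) / ε ^ 3 + F (u x) / ε := by
    intro x hx
    rw [smul_eq_mul, abs_mul, abs_of_nonneg (Real.sqrt_nonneg _)]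
    exact key_ineq ε (u' x) (F (u x)) hε (hFnn _) (hval x hx)
  have hI1 : IntervalIntegrable (fun x => u' x • g (u x)) MeasureTheory.volume c d := by
    apply ContinuousOn.intervalIntegrable
    rw [hIcc]
    exact hu'.smul (hgcont.comp_continuousOn hucont)
  have hI2 : IntervalIntegrable
      (fun x => (Real.sqrt (1 + ε ^ 4 * u' x ^ 2) - 1) / ε ^ 3 + F (u x) / ε)
      MeasureTheory.volume c d := by
    apply ContinuousOn.intervalIntegrable
    rw [hIcc]
    exact (((continuous_const.add ((continuous_const.mul (continuous_pow 2)).comp continuous_id)).sqrt.comp_continuousOn hu').sub continuousOn_const).div_const _ |>.add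
      ((hF.comp_continuousOn hucont).div_const _)
  calc |∫ x in c..d, u' x • g (u x)|
      ≤ ∫ x in c..d, |u' x • g (u x)| :=
        intervalIntegral.abs_integral_le_integral_abs hcd.le
    _ ≤ ∫ x in c..d, ((Real.sqrt (1 + ε ^ 4 * u' x ^ 2) - 1) / ε ^ 3 + F (u x) / ε) :=
        intervalIntegral.integral_mono_on hcd.le hI1.abs hI2 habs
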